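/- arXiv:1201.5878 — 2 statements merged into one kernel-verified Lean document; each statement's English description precedes it below -/
import Mathlib

section
/- There is an absolute constant C₁ > 0 such that for every set B ⊂ {z ∈ ℂ : 1/2 < |z| < 1} with 𝔻 \ B a simply connected region, C₁·|B| ≤ dcap(B), where |B| denotes the Euclidean (2-dimensional Lebesgue) area of B. -/
open Complex MeasureTheory Set Filter Metric Bornology Topology

noncomputable section

/-- The upper half-plane `ℍ = {z ∈ ℂ : Im z > 0}`. -/
def UHP : Set ℂ := {z : ℂ | 0 < z.im}

/-- The open unit disk `𝔻 = {z ∈ ℂ : |z| < 1}`. -/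
def unitDisk : Set ℂ := Metric.ball (0 : ℂ) 1

/-- The annulus `{z ∈ ℂ : 1/2 < |z| < 1}`. -/
def annulus : Set ℂ := {z : ℂ | 1 / 2 < ‖z‖ ∧ ‖z‖ < 1}

/-- The hyperbolic distance on the upper half-plane (density `|dz| / Im z`):
`d(z,w) = 2 arsinh (|z - w| / (2 √(Im z · Im w)))`. -/
def uhpDist (z w : ℂ) : ℝ :=
  2 * Real.arsinh (‖z - w‖ / (2 * Real.sqrt (z.im * w.im)))

/-- The hyperbolic distance on the unit disk (density `2|dz| / (1 - |z|²)`):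
`d(z,w) = 2 artanh ρ = log ((1 + ρ)/(1 - ρ))` with `ρ = |(z - w)/(1 - w̄ z)|`. -/
def diskDist (z w : ℂ) : ℝ :=
  Real.log ((1 + ‖(z - w) / (1 - (starRingEnd ℂ) w * z)‖) /
    (1 - ‖(z - w) / (1 - (starRingEnd ℂ) w * z)‖))

/-- The closed hyperbolic neighborhood of radius one of `A` inside the upper half-plane:
`N(A) = {z ∈ ℍ : dist_hyp(z, A) ≤ 1}`. -/
def uhpHypNbhd (A : Set ℂ) : Set ℂ :=
  {z ∈ UHP | (⨅ w : A, ENNReal.ofReal (uhpDist z ↑w)) ≤ 1}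

/-- The closed hyperbolic neighborhood of radius one of `B` inside the unit disk:
`N(B) = {z ∈ 𝔻 : dist_hyp(z, B) ≤ 1}`. -/
def diskHypNbhd (B : Set ℂ) : Set ℂ :=
  {z ∈ unitDisk | (⨅ w : B, ENNReal.ofReal (diskDist z ↑w)) ≤ 1}

/-- A hull: a bounded subset of the upper half-plane such that `ℍ \ A` is a
simply connected region. -/
def IsHull (A : Set ℂ) : Prop :=
  A ⊆ UHP ∧ IsBounded A ∧ IsOpen (UHP \ A) ∧ SimplyConnectedSpace ↥(UHP \ A)

/-- `f` is a conformal map of `U` onto `V`: holomorphic on `U` and a bijection of `U` onto `V`. -/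
def IsConformalMapOn (f : ℂ → ℂ) (U V : Set ℂ) : Prop :=
  DifferentiableOn ℂ f U ∧ Set.BijOn f U V

/-- `g` is the hydrodynamically normalized conformal map of `ℍ \ A` onto `ℍ`:
conformal and `g(z) - z → 0` as `z → ∞` (which pins down `g` uniquely,
given that `z (g z - z)` has a finite limit). -/
def IsHydroMap (A : Set ℂ) (g : ℂ → ℂ) : Prop :=
  IsConformalMapOn g (UHP \ A) UHP ∧
    Tendsto (fun z => g z - z) (Bornology.cobounded ℂ ⊓ 𝓟 (UHP \ A)) (𝓝 0)

/-- `h` is the half-plane capacity of the hull `A`, witnessed by the hydrodynamically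
normalized map `g`: `h = lim_{z → ∞} z (g_A(z) - z)`. -/
def HasHcap (A : Set ℂ) (g : ℂ → ℂ) (h : ℝ) : Prop :=
  IsHydroMap A g ∧
    Tendsto (fun z => z * (g z - z)) (Bornology.cobounded ℂ ⊓ 𝓟 (UHP \ A)) (𝓝 (h : ℂ))

end

noncomputable section

lemma mv {h : ℂ → ℂ} {r : ℝ} (hr : 0 < r) (hd : DiffContOnCl ℂ h (ball 0 r)) :
    2 * Real.pi * ‖h 0‖ ≤ ∫ θ in (0:ℝ)..(2*Real.pi), ‖h (circleMap 0 r θ)‖ := by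
  have key : (∮ z in C(0, r), (z - 0)⁻¹ • h z) = (2 * Real.pi * I) • h 0 :=
    hd.circleIntegral_sub_inv_smul (mem_ball_self hr)
  have e1 : (∮ z in C(0, r), (z - 0)⁻¹ • h z)
      = ∫ θ in (0:ℝ)..(2*Real.pi), I • h (circleMap 0 r θ) := by
    rw [circleIntegral]
    refine intervalIntegral.integral_congr fun θ _ => ?_
    have hne : circleMap 0 r θ ≠ 0 := circleMap_ne_center hr.ne'
    simp only [deriv_circleMap, sub_zero, smul_eq_mul, circleMap_sub_center]
    field_simp
  have e2 : (∫ θ in (0:ℝ)..(2*Real.pi), I • h (circleMap 0 r θ))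
      = I • ∫ θ in (0:ℝ)..(2*Real.pi), h (circleMap 0 r θ) := by
    rw [intervalIntegral.integral_smul]
  have e3 : (∫ θ in (0:ℝ)..(2*Real.pi), h (circleMap 0 r θ)) = (2 * Real.pi) • h 0 := by
    have := key
    rw [e1, e2] at this
    have hI : (I : ℂ) ≠ 0 := I_ne_zero
    have : I * ∫ θ in (0:ℝ)..(2*Real.pi), h (circleMap 0 r θ) = I * ((2*Real.pi) • h 0) := by
      simpa [smul_eq_mul, mul_comm, mul_assoc, mul_left_comm] using this
    exact mul_left_cancel₀ hI this
  calc 2 * Real.pi * ‖h 0‖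
      = ‖∫ θ in (0:ℝ)..(2*Real.pi), h (circleMap 0 r θ)‖ := by
        rw [e3, norm_smul, Real.norm_eq_abs,
          _root_.abs_of_nonneg (by positivity : (0:ℝ) ≤ 2*Real.pi)]
    _ ≤ ∫ θ in (0:ℝ)..(2*Real.pi), ‖h (circleMap 0 r θ)‖ :=
        intervalIntegral.norm_integral_le_integral_norm (by positivity)
    _ = ∫ θ in (0:ℝ)..(2*Real.pi), ‖h (circleMap 0 r θ)‖ := rfl

lemma meanarea {f : ℂ → ℂ} (hf : DifferentiableOn ℂ f (ball 0 1)) {s : ℝ} (h0 : 0 < s) (h1 : s < 1) :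
    Real.pi * s^2 * ‖deriv f 0‖^2
      ≤ ∫ z in closedBall (0:ℂ) s, ‖deriv f z‖^2 := by
  have pi_pos := Real.pi_pos
  set a2 : ℝ := ‖deriv f 0‖^2 with ha2
  set u : ℂ → ℝ := fun z => ‖deriv f z‖^2 with hu
  set h : ℂ → ℂ := fun z => (deriv f z)^2 with hh
  have habs : ∀ z, ‖h z‖ = u z := fun z => by simp [hh, hu, map_pow]
  have hderiv : AnalyticOnNhd ℂ (deriv f) (ball (0:ℂ) 1) :=
    (hf.analyticOnNhd isOpen_ball).deriv
  have hhd : DifferentiableOn ℂ h (ball (0:ℂ) 1) := by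
    have := hderiv.differentiableOn
    exact this.pow 2
  have hucont : ContinuousOn u (ball (0:ℂ) 1) := by
    have : ContinuousOn (deriv f) (ball (0:ℂ) 1) := hderiv.differentiableOn.continuousOn
    exact (continuous_norm.comp_continuousOn this).pow 2
  have hcBsub : closedBall (0:ℂ) s ⊆ ball 0 1 := closedBall_subset_ball h1
  -- mean value on circles
  have hmean : ∀ r ∈ Ioc (0:ℝ) s,
      2 * Real.pi * a2 ≤ ∫ θ in Ioo (-Real.pi) Real.pi, u (circleMap 0 r θ) := by
    intro r hr
    have hrpos : 0 < r := hr.1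
    have hcb : closedBall (0:ℂ) r ⊆ ball 0 1 :=
      (closedBall_subset_closedBall hr.2).trans hcBsub
    have hdc : DiffContOnCl ℂ h (ball 0 r) := by
      refine DifferentiableOn.diffContOnCl ?_
      rw [closure_ball _ hrpos.ne']
      exact hhd.mono hcb
    have key := mv hrpos hdc
    rw [habs] at key
    have hper : Function.Periodic (fun θ => u (circleMap 0 r θ)) (2*Real.pi) :=
      fun θ => congrArg u (periodic_circleMap 0 r θ)
    have hshift := hper.intervalIntegral_add_eq (-Real.pi) 0
    rw [zero_add] at hshift
    have hb : -Real.pi + 2*Real.pi = Real.pi := by ring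
    rw [hb] at hshift
    have : ∫ θ in Ioo (-Real.pi) Real.pi, u (circleMap 0 r θ)
        = ∫ θ in (0:ℝ)..(2*Real.pi), u (circleMap 0 r θ) := by
      rw [← hshift, intervalIntegral.integral_of_le (by linarith), integral_Ioc_eq_integral_Ioo]
    rw [this]
    simp only [habs] at key
    exact key
  -- the indicator function and polar coordinates
  set F : ℂ → ℝ := (closedBall (0:ℂ) s).indicator u with hF
  set P : ℝ × ℝ → ℝ := fun p => p.1 • F (Complex.polarCoord.symm p) with hP
  have hsymm_cont : Continuous (fun p : ℝ × ℝ => Complex.polarCoord.symm p) := by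
    have : (fun p : ℝ × ℝ => Complex.polarCoord.symm p)
        = fun p : ℝ × ℝ => (p.1 : ℂ) * (Real.cos p.2 + Real.sin p.2 * I) := by
      funext p; exact Complex.polarCoord_symm_apply p
    rw [this]
    exact (Complex.continuous_ofReal.comp continuous_fst).mul
      ((Complex.continuous_ofReal.comp (Real.continuous_cos.comp continuous_snd)).add
        ((Complex.continuous_ofReal.comp (Real.continuous_sin.comp continuous_snd)).mul continuous_const))
  have humeas : Measurable u := by
    have : Measurable (deriv f) := measurable_deriv f
    exact (continuous_norm.measurable.comp this).pow_const 2
  have hFmeas : Measurable F := humeas.indicator measurableSet_closedBall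
  have hPmeas : Measurable P := measurable_fst.smul (hFmeas.comp hsymm_cont.measurable)
  have habs_symm : ∀ p : ℝ × ℝ, ‖Complex.polarCoord.symm p‖ = |p.1| :=
    Complex.norm_polarCoord_symm
  -- P vanishes for p.1 > s
  have hPzero : ∀ p : ℝ × ℝ, s < p.1 → P p = 0 := by
    intro p hp
    have : Complex.polarCoord.symm p ∉ closedBall (0:ℂ) s := by
      simp only [mem_closedBall, Complex.dist_eq, sub_zero]
      rw [show ‖Complex.polarCoord.symm p‖ = |p.1| from habs_symm p]
      exact not_le.2 (hp.trans_le (le_abs_self _))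
    have hz : F (Complex.polarCoord.symm p) = 0 := indicator_of_notMem this u
    rw [hP]
    simp only [hz, smul_zero]
  -- bound on u over the closed ball
  obtain ⟨M, hM⟩ : ∃ M, ∀ z ∈ closedBall (0:ℂ) s, ‖u z‖ ≤ M :=
    (isCompact_closedBall (0:ℂ) s).exists_bound_of_continuousOn (hucont.mono hcBsub)
  -- integrability of P on the small product set
  have hsmall : MeasurableSet (Ioc (0:ℝ) s ×ˢ Ioo (-Real.pi) Real.pi) :=
    measurableSet_Ioc.prod measurableSet_Ioo
  have hint_small : IntegrableOn P (Ioc (0:ℝ) s ×ˢ Ioo (-Real.pi) Real.pi) := by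
    refine Measure.integrableOn_of_bounded (M := s * max M 0) ?_ hPmeas.aestronglyMeasurable ?_
    · rw [Measure.volume_eq_prod ℝ ℝ, Measure.prod_prod, Real.volume_Ioc, Real.volume_Ioo]
      exact ENNReal.mul_ne_top ENNReal.ofReal_ne_top ENNReal.ofReal_ne_top
    · refine (ae_restrict_iff' hsmall).2 (ae_of_all _ fun p hp => ?_)
      obtain ⟨hp1, hp2⟩ := hp
      have h1 : |p.1| ≤ s := by
        rw [abs_of_pos hp1.1]; exact hp1.2
      have h2 : ‖F (Complex.polarCoord.symm p)‖ ≤ max M 0 := by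
        by_cases hmem : Complex.polarCoord.symm p ∈ closedBall (0:ℂ) s
        · rw [hF, indicator_of_mem hmem]
          exact (hM _ hmem).trans (le_max_left _ _)
        · rw [hF, indicator_of_notMem hmem]; simp
      calc ‖P p‖ = |p.1| * ‖F (Complex.polarCoord.symm p)‖ := by
            rw [hP]; simp [norm_smul, Real.norm_eq_abs]
        _ ≤ s * max M 0 := mul_le_mul h1 h2 (norm_nonneg _) h0.le
  have htarget_meas : MeasurableSet polarCoord.target := by
    rw [polarCoord_target]; exact measurableSet_Ioi.prod measurableSet_Ioo
  have hint_target : IntegrableOn P polarCoord.target := by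
    have hzero : IntegrableOn P (polarCoord.target \ Ioc (0:ℝ) s ×ˢ Ioo (-Real.pi) Real.pi) := by
      refine (integrableOn_congr_fun (fun p hp => ?_) (htarget_meas.diff hsmall)).mpr
        (integrableOn_zero)
      obtain ⟨hpt, hpn⟩ := hp
      rw [polarCoord_target] at hpt
      have hp1 : 0 < p.1 := hpt.1
      have : s < p.1 := by
        by_contra hle
        exact hpn ⟨⟨hp1, not_lt.1 hle⟩, hpt.2⟩
      exact hPzero p this
    exact (hint_small.union hzero).mono_set fun p hp => by
      by_cases hm : p ∈ Ioc (0:ℝ) s ×ˢ Ioo (-Real.pi) Real.pi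
      · exact Or.inl hm
      · exact Or.inr ⟨hp, hm⟩
  -- chain of equalities
  have I1 : ∫ z in closedBall (0:ℂ) s, u z = ∫ z, F z := (integral_indicator measurableSet_closedBall).symm
  have I2 : ∫ z, F z = ∫ p in polarCoord.target, P p :=
    (Complex.integral_comp_polarCoord_symm F).symm
  have hIoiIoo : IntegrableOn P (Ioi (0:ℝ) ×ˢ Ioo (-Real.pi) Real.pi) := by
    rwa [polarCoord_target] at hint_target
  have hint_target' : Integrable P
      ((volume.restrict (Ioi (0:ℝ))).prod (volume.restrict (Ioo (-Real.pi) Real.pi))) := by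
    rw [Measure.prod_restrict]
    exact hIoiIoo
  have I3 : ∫ p in polarCoord.target, P p
      = ∫ r in Ioi (0:ℝ), ∫ θ in Ioo (-Real.pi) Real.pi, P (r, θ) := by
    rw [polarCoord_target]
    exact setIntegral_prod P hIoiIoo
  have hQint : Integrable (fun r => ∫ θ in Ioo (-Real.pi) Real.pi, P (r, θ))
      (volume.restrict (Ioi (0:ℝ))) := hint_target'.integral_prod_left
  set Q : ℝ → ℝ := fun r => ∫ θ in Ioo (-Real.pi) Real.pi, P (r, θ) with hQ
  set c : ℝ := 2 * Real.pi * a2 with hc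
  have ha2nn : 0 ≤ a2 := by positivity
  set L : ℝ → ℝ := (Ioc (0:ℝ) s).indicator (fun r => c * r) with hL
  have hLint_glob : Integrable L := by
    have hio : IntegrableOn (fun r => c * r) (Ioc (0:ℝ) s) :=
      (continuous_const.mul continuous_id).integrableOn_Ioc
    rwa [← integrable_indicator_iff measurableSet_Ioc] at hio
  have hpt : ∀ r ∈ Ioi (0:ℝ), L r ≤ Q r := by
    intro r hr
    rw [mem_Ioi] at hr
    by_cases hrs : r ≤ s
    · have hmem : r ∈ Ioc (0:ℝ) s := ⟨hr, hrs⟩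
      have hcirc : ∀ θ : ℝ, Complex.polarCoord.symm (r, θ) = circleMap 0 r θ := by
        intro θ
        rw [Complex.polarCoord_symm_apply, circleMap_zero, Complex.exp_mul_I]
        simp [Complex.ofReal_cos, Complex.ofReal_sin]
      have hval : ∀ θ ∈ Ioo (-Real.pi) Real.pi, P (r, θ) = r * u (circleMap 0 r θ) := by
        intro θ _
        have hmem2 : circleMap 0 r θ ∈ closedBall (0:ℂ) s :=
          closedBall_subset_closedBall hrs (circleMap_mem_closedBall 0 hr.le θ)
        rw [hP]
        simp only [hcirc θ]
        rw [hF, indicator_of_mem hmem2, smul_eq_mul]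
      have hQr : Q r = r * ∫ θ in Ioo (-Real.pi) Real.pi, u (circleMap 0 r θ) := by
        rw [show Q r = ∫ θ in Ioo (-Real.pi) Real.pi, P (r, θ) from rfl,
          setIntegral_congr_fun measurableSet_Ioo hval, integral_const_mul]
      have hm := hmean r hmem
      rw [hL, indicator_of_mem hmem, hQr, hc]
      calc 2*Real.pi*a2 * r = r * (2*Real.pi*a2) := by ring
        _ ≤ r * ∫ θ in Ioo (-Real.pi) Real.pi, u (circleMap 0 r θ) :=
            mul_le_mul_of_nonneg_left hm hr.le
    · have hrs' : s < r := not_le.1 hrs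
      have hQr : Q r = 0 := by
        rw [show Q r = ∫ θ in Ioo (-Real.pi) Real.pi, P (r, θ) from rfl,
          setIntegral_congr_fun measurableSet_Ioo (fun θ _ => hPzero (r, θ) hrs')]
        simp
      have hLr : L r = 0 := indicator_of_notMem (fun hmem => hrs hmem.2) _
      rw [hLr, hQr]
  have I4 : ∫ r in Ioi (0:ℝ), L r ≤ ∫ r in Ioi (0:ℝ), Q r :=
    setIntegral_mono_on hLint_glob.integrableOn hQint measurableSet_Ioi hpt
  have I5 : ∫ r in Ioi (0:ℝ), L r = Real.pi * s^2 * a2 := by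
    rw [hL, setIntegral_indicator measurableSet_Ioc,
      show Ioi (0:ℝ) ∩ Ioc 0 s = Ioc 0 s from inter_eq_right.2 (fun x hx => hx.1),
      ← intervalIntegral.integral_of_le h0.le, intervalIntegral.integral_const_mul,
      integral_id]
    ring
  rw [I5] at I4
  calc Real.pi * s^2 * ‖deriv f 0‖^2 = Real.pi * s^2 * a2 := rfl
    _ ≤ ∫ r in Ioi (0:ℝ), Q r := I4
    _ = ∫ p in polarCoord.target, P p := I3.symm
    _ = ∫ z, F z := I2.symm
    _ = ∫ z in closedBall (0:ℂ) s, u z := I1.symm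


lemma clm_det (c : ℂ) :
    ((ContinuousLinearMap.smulRight (1 : ℂ →L[ℂ] ℂ) c).restrictScalars ℝ).det
      = Complex.normSq c := by
  have h : ((ContinuousLinearMap.smulRight (1 : ℂ →L[ℂ] ℂ) c).restrictScalars ℝ).toLinearMap
      = Algebra.lmul ℝ ℂ c := by
    apply LinearMap.ext
    intro w
    simp [Algebra.lmul, mul_comm]
  rw [ContinuousLinearMap.det, h]
  exact (Algebra.norm_apply (R := ℝ) c).symm.trans (Algebra.norm_complex_apply c)

lemma image_area {f : ℂ → ℂ} (hf : DifferentiableOn ℂ f (ball 0 1))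
    (hinj : InjOn f (ball 0 1)) :
    ∫⁻ z in ball (0:ℂ) 1, ENNReal.ofReal (‖deriv f z‖^2)
      = volume (f '' ball 0 1) := by
  set f' : ℂ → ℂ →L[ℝ] ℂ :=
    fun z => (ContinuousLinearMap.smulRight (1 : ℂ →L[ℂ] ℂ) (deriv f z)).restrictScalars ℝ with hf'def
  have hderiv : ∀ x ∈ ball (0:ℂ) 1, HasFDerivWithinAt f (f' x) (ball 0 1) x := by
    intro x hx
    have hdx : DifferentiableAt ℂ f x := hf.differentiableAt (isOpen_ball.mem_nhds hx)
    exact ((hdx.hasDerivAt.hasFDerivAt).restrictScalars ℝ).hasFDerivWithinAt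
  have := lintegral_abs_det_fderiv_eq_addHaar_image volume measurableSet_ball hderiv hinj
  rw [← this]
  refine lintegral_congr_ae (ae_of_all _ fun z => ?_)
  simp only [hf'def, clm_det, Complex.sq_norm]
  rw [_root_.abs_of_nonneg (Complex.normSq_nonneg _)]

lemma inj_deriv_ne_zero {f : ℂ → ℂ} (hf : DifferentiableOn ℂ f (ball 0 1))
    (hinj : InjOn f (ball 0 1)) : deriv f 0 ≠ 0 := by
  intro hd0
  have hball : (0:ℂ) ∈ ball (0:ℂ) 1 := by simp
  set g : ℂ → ℂ := fun z => f z - f 0 with hgdef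
  have han : AnalyticAt ℂ g 0 :=
    (((hf.analyticOnNhd isOpen_ball) 0 hball).sub analyticAt_const)
  have hg0 : g 0 = 0 := by simp [hgdef]
  have hginj : InjOn g (ball (0:ℂ) 1) := by
    intro x hx y hy hxy
    apply hinj hx hy
    have : f x - f 0 = f y - f 0 := hxy
    linear_combination this
  have hdg0 : deriv g 0 = 0 := by
    rw [hgdef]
    rw [deriv_sub_const]
    exact hd0
  -- order is finite
  have hne_top : analyticOrderAt g 0 ≠ ⊤ := by
    intro htop
    rw [analyticOrderAt_eq_top] at htop
    have hb : ∀ᶠ z in 𝓝 (0:ℂ), z ∈ ball (0:ℂ) 1 := isOpen_ball.eventually_mem hball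
    obtain ⟨z, ⟨hz0, hzb⟩, hzne⟩ :=
      ((((htop.and hb).filter_mono (nhdsWithin_le_nhds : 𝓝[≠] (0:ℂ) ≤ 𝓝 0)).and
        self_mem_nhdsWithin)).exists
    exact hzne (hginj hzb hball (hz0.trans hg0.symm))
  obtain ⟨n, hn⟩ : ∃ n : ℕ, analyticOrderAt g 0 = n := by
    lift analyticOrderAt g 0 to ℕ using hne_top with n hn
    exact ⟨n, rfl⟩
  obtain ⟨gg, hgg_an, hgg0, hev⟩ := (han.analyticOrderAt_eq_natCast (n := n)).mp hn
  -- n ≥ 2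
  have hn0 : n ≠ 0 := by
    intro h0
    subst h0
    have := hev.self_of_nhds
    simp only [pow_zero, one_smul] at this
    rw [hg0] at this
    exact hgg0 this.symm
  have hn1 : n ≠ 1 := by
    intro h1
    subst h1
    have hdg : deriv g 0 = gg 0 := by
      have hloc : g =ᶠ[𝓝 (0:ℂ)] fun z => z * gg z := by
        filter_upwards [hev] with z hz
        simpa [smul_eq_mul] using hz
      rw [hloc.deriv_eq]
      have hd : HasDerivAt (fun z : ℂ => z * gg z) (1 * gg 0 + 0 * deriv gg 0) 0 := by
        have h1 : HasDerivAt (fun z : ℂ => z) 1 (0:ℂ) := hasDerivAt_id 0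
        have h2 : HasDerivAt gg (deriv gg 0) 0 := hgg_an.differentiableAt.hasDerivAt
        exact h1.mul h2
      rw [hd.deriv]
      ring
    rw [hdg0] at hdg
    exact hgg0 hdg.symm
  have hn2 : 2 ≤ n := by omega
  have hnne : (n:ℂ) ≠ 0 := Nat.cast_ne_zero.mpr hn0
  -- construct n-th root of gg
  set c : ℂ := Complex.exp ((n:ℂ)⁻¹ * Complex.log (gg 0)) with hcdef
  have hcn : c ^ n = gg 0 := by
    rw [hcdef, ← Complex.exp_nat_mul,
      show (n:ℂ) * ((n:ℂ)⁻¹ * Complex.log (gg 0)) = Complex.log (gg 0) by field_simp]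
    exact Complex.exp_log hgg0
  have hcne : c ≠ 0 := Complex.exp_ne_zero _
  set h : ℂ → ℂ := fun z => c * Complex.exp ((n:ℂ)⁻¹ * Complex.log (gg z * (gg 0)⁻¹))
    with hhdef
  have hq_an : AnalyticAt ℂ (fun z => gg z * (gg 0)⁻¹) 0 := hgg_an.mul analyticAt_const
  have hq0 : gg 0 * (gg 0)⁻¹ = 1 := mul_inv_cancel₀ hgg0
  have hh_an : AnalyticAt ℂ h 0 := by
    refine analyticAt_const.mul (AnalyticAt.cexp (analyticAt_const.mul (hq_an.clog ?_)))
    rw [hq0]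
    exact Complex.one_mem_slitPlane
  have hh0 : h 0 = c := by
    rw [hhdef]
    simp only [hq0, Complex.log_one, mul_zero, Complex.exp_zero, mul_one]
  have hpow : ∀ᶠ z in 𝓝 (0:ℂ), (h z) ^ n = gg z := by
    have hne : ∀ᶠ z in 𝓝 (0:ℂ), gg z ≠ 0 := hgg_an.continuousAt.eventually_ne hgg0
    filter_upwards [hne] with z hz
    have hqne : gg z * (gg 0)⁻¹ ≠ 0 := mul_ne_zero hz (inv_ne_zero hgg0)
    rw [hhdef]
    simp only []
    rw [mul_pow, hcn, ← Complex.exp_nat_mul,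
      show (n:ℂ) * ((n:ℂ)⁻¹ * Complex.log (gg z * (gg 0)⁻¹))
        = Complex.log (gg z * (gg 0)⁻¹) by field_simp,
      Complex.exp_log hqne]
    field_simp
  set φ : ℂ → ℂ := fun z => z * h z with hφdef
  have hφ_an : AnalyticAt ℂ φ 0 := analyticAt_id.mul hh_an
  have hφ0 : φ 0 = 0 := by simp [hφdef]
  have hgφ : ∀ᶠ z in 𝓝 (0:ℂ), g z = (φ z) ^ n := by
    filter_upwards [hev, hpow] with z h1 h2
    rw [h1, hφdef]
    simp only [sub_zero, smul_eq_mul, mul_pow]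
    rw [h2]
  have hhne : ∀ᶠ z in 𝓝 (0:ℂ), h z ≠ 0 :=
    hh_an.continuousAt.eventually_ne (hh0 ▸ hcne)
  have hnotconst : ¬ (∀ᶠ z in 𝓝 (0:ℂ), φ z = φ 0) := by
    intro hconst
    obtain ⟨z, ⟨hzc, hzh⟩, hzne⟩ :=
      (((hconst.and hhne).filter_mono (nhdsWithin_le_nhds : 𝓝[≠] (0:ℂ) ≤ 𝓝 0)).and
        self_mem_nhdsWithin).exists
    rw [hφ0, hφdef] at hzc
    rcases mul_eq_zero.mp hzc with hcase | hcase
    · exact hzne hcase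
    · exact hzh hcase
  have hmap : 𝓝 (0:ℂ) ≤ map φ (𝓝 0) := by
    rcases hφ_an.eventually_constant_or_nhds_le_map_nhds with hcase | hcase
    · exact absurd hcase hnotconst
    · rwa [hφ0] at hcase
  set U : Set ℂ := {z | g z = (φ z)^n} ∩ ball (0:ℂ) 1 with hUdef
  have hU : U ∈ 𝓝 (0:ℂ) := inter_mem hgφ (isOpen_ball.mem_nhds hball)
  have himg : φ '' U ∈ 𝓝 (0:ℂ) := hmap (image_mem_map hU)
  set ζ : ℂ := Complex.exp (2 * Real.pi * I * (n:ℂ)⁻¹) with hζdef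
  have hζn : ζ ^ n = 1 := by
    rw [hζdef, ← Complex.exp_nat_mul,
      show (n:ℂ) * (2 * Real.pi * I * (n:ℂ)⁻¹) = 2 * Real.pi * I by
        field_simp,
      Complex.exp_two_pi_mul_I]
  have hζ1 : ζ ≠ 1 := by
    intro heq
    rw [hζdef, Complex.exp_eq_one_iff] at heq
    obtain ⟨k, hk⟩ := heq
    have h2πI : (2 * (Real.pi:ℂ) * I) ≠ 0 := by
      simp [Real.pi_ne_zero, Complex.I_ne_zero, Complex.ofReal_ne_zero]
    have hkn : (n:ℂ)⁻¹ = (k:ℂ) := by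
      apply mul_left_cancel₀ h2πI
      linear_combination hk
    have hnk : (n:ℂ) * (k:ℂ) = 1 := by
      rw [← hkn]
      exact mul_inv_cancel₀ hnne
    have hZ : (n:ℤ) * k = 1 := by
      have : (((n:ℤ) * k : ℤ) : ℂ) = ((1:ℤ) : ℂ) := by push_cast; rw [← hnk]
      exact_mod_cast this
    have : (n:ℤ) ≤ 1 := Int.le_of_dvd one_pos ⟨k, hZ.symm⟩
    omega
  have hcontζ : ContinuousAt (fun w : ℂ => ζ * w) 0 :=
    (continuous_const.mul continuous_id).continuousAt
  have hpre : (fun w : ℂ => ζ * w) ⁻¹' (φ '' U) ∈ 𝓝 (0:ℂ) := by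
    apply hcontζ.preimage_mem_nhds
    rwa [show ζ * 0 = 0 by ring]
  have hVe : ∀ᶠ w in 𝓝 (0:ℂ), w ∈ φ '' U ∩ (fun w : ℂ => ζ * w) ⁻¹' (φ '' U) :=
    inter_mem himg hpre
  obtain ⟨w, ⟨hw1, hw2⟩, hwne⟩ :=
    ((hVe.filter_mono (nhdsWithin_le_nhds : 𝓝[≠] (0:ℂ) ≤ 𝓝 0)).and
      self_mem_nhdsWithin).exists
  obtain ⟨z₁, hz₁U, hz₁⟩ := hw1
  obtain ⟨z₂, hz₂U, hz₂⟩ := hw2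
  have hz₂' : φ z₂ = ζ * w := hz₂
  have hz12 : z₁ ≠ z₂ := by
    intro heq
    have hww : ζ * w = w := by rw [← hz₂', ← heq, hz₁]
    exact hζ1 (mul_right_cancel₀ hwne (hww.trans (one_mul w).symm))
  have hgeq : g z₁ = g z₂ := by
    have e1 : g z₁ = w ^ n := by rw [(hz₁U.1 : g z₁ = (φ z₁)^n), hz₁]
    have e2 : g z₂ = w ^ n := by
      rw [(hz₂U.1 : g z₂ = (φ z₂)^n), hz₂', mul_pow, hζn, one_mul]
    rw [e1, e2]
  exact hz12 (hginj hz₁U.2 hz₂U.2 hgeq)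

/-- There is an absolute constant `C₁ > 0` such that for every `B ⊆ {1/2 < |z| < 1}` with
`𝔻 \ B` a simply connected region, `C₁ |B| ≤ dcap(B)`, where `|B|` is the Euclidean area
of `B` and `dcap(B) = -log crad(𝔻 \ B, 0) = -log |f'(0)|` for a conformal map
`f : 𝔻 → 𝔻 \ B` with `f(0) = 0`. -/
theorem area_le_dcap :
    ∃ C₁ : ℝ, 0 < C₁ ∧
      ∀ (B : Set ℂ) (f : ℂ → ℂ),
        B ⊆ annulus →
        IsOpen (unitDisk \ B) → SimplyConnectedSpace ↥(unitDisk \ B) →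
        IsConformalMapOn f unitDisk (unitDisk \ B) → f 0 = 0 →
        C₁ * (volume B).toReal ≤ -Real.log ‖deriv f 0‖ := by
  have pi_pos := Real.pi_pos
  refine ⟨1 / (2 * Real.pi), by positivity, ?_⟩
  intro B f hB hopen _hsc hconf _hf0
  obtain ⟨hdiff, hbij⟩ := hconf
  have hdiff' : DifferentiableOn ℂ f (ball (0:ℂ) 1) := hdiff
  have hinj : InjOn f (ball (0:ℂ) 1) := hbij.injOn
  have hBsub : B ⊆ ball (0:ℂ) 1 := fun z hz =>
    mem_ball_zero_iff.mpr (by exact (hB hz).2)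
  have hmB : MeasurableSet B := by
    have : B = ball (0:ℂ) 1 \ (ball (0:ℂ) 1 \ B) := (diff_diff_cancel_left hBsub).symm
    rw [this]
    exact measurableSet_ball.diff (hopen.measurableSet)
  have himg_eq : f '' ball (0:ℂ) 1 = ball (0:ℂ) 1 \ B := hbij.image_eq
  set a : ℝ := ‖deriv f 0‖ with hadef
  have hane : deriv f 0 ≠ 0 := inj_deriv_ne_zero hdiff' hinj
  have hapos : 0 < a := norm_pos_iff.mpr hane
  set V : ENNReal := volume (ball (0:ℂ) 1 \ B) with hVdef
  have hVball : V ≤ volume (ball (0:ℂ) 1) := measure_mono diff_subset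
  have hballvol : volume (ball (0:ℂ) 1) = ENNReal.ofReal Real.pi := by
    rw [Complex.volume_ball, ENNReal.ofReal_one, one_pow, one_mul,
      ← ENNReal.ofReal_coe_nnreal, NNReal.coe_real_pi]
  have hVne : V ≠ ⊤ :=
    (hVball.trans_lt (by rw [hballvol]; exact ENNReal.ofReal_lt_top)).ne
  have hBne : volume B ≠ ⊤ :=
    ((measure_mono hBsub).trans_lt (by rw [hballvol]; exact ENNReal.ofReal_lt_top)).ne
  have hlint : ∫⁻ z in ball (0:ℂ) 1, ENNReal.ofReal (‖deriv f z‖^2) = V := by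
    rw [image_area hdiff' hinj, himg_eq]
  have hall : ∀ s : ℝ, 0 < s → s < 1 → Real.pi * s^2 * a^2 ≤ V.toReal := by
    intro s hs0 hs1
    have h1 := meanarea hdiff' hs0 hs1
    have hcont : ContinuousOn (fun z => ‖deriv f z‖^2) (closedBall (0:ℂ) s) := by
      have han : AnalyticOnNhd ℂ (deriv f) (ball (0:ℂ) 1) :=
        (hdiff'.analyticOnNhd isOpen_ball).deriv
      exact ((continuous_norm.comp_continuousOn
        han.differentiableOn.continuousOn).pow 2).mono (closedBall_subset_ball hs1)
    have hint : IntegrableOn (fun z => ‖deriv f z‖^2) (closedBall (0:ℂ) s) :=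
      hcont.integrableOn_compact (isCompact_closedBall _ _)
    have h2 : ENNReal.ofReal (∫ z in closedBall (0:ℂ) s, ‖deriv f z‖^2)
        ≤ ∫⁻ z in closedBall (0:ℂ) s, ENNReal.ofReal (‖deriv f z‖^2) :=
      (ofReal_integral_eq_lintegral_ofReal hint (ae_of_all _ fun z => by positivity)).le
    have h3 : (∫⁻ z in closedBall (0:ℂ) s, ENNReal.ofReal (‖deriv f z‖^2))
        ≤ V := by
      rw [← hlint]
      exact lintegral_mono_set (closedBall_subset_ball hs1)
    have h4 : ENNReal.ofReal (Real.pi * s^2 * a^2) ≤ V :=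
      le_trans (le_trans (ENNReal.ofReal_le_ofReal h1) h2) h3
    exact (ENNReal.ofReal_le_iff_le_toReal hVne).mp h4
  have harea : Real.pi * a^2 ≤ V.toReal := by
    have htend : Tendsto (fun s : ℝ => Real.pi * s^2 * a^2) (𝓝[<] (1:ℝ))
        (𝓝 (Real.pi * 1^2 * a^2)) :=
      Tendsto.mono_left ((Continuous.tendsto (by continuity) 1)) nhdsWithin_le_nhds
    have hev : ∀ᶠ s in 𝓝[<] (1:ℝ), Real.pi * s^2 * a^2 ≤ V.toReal := by
      filter_upwards [Ioo_mem_nhdsLT_of_mem (⟨zero_lt_one, le_refl 1⟩ : (1:ℝ) ∈ Ioc 0 1)]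
        with s hs
      exact hall s hs.1 hs.2
    have := le_of_tendsto htend hev
    calc Real.pi * a^2 = Real.pi * 1^2 * a^2 := by ring
      _ ≤ V.toReal := this
  have hsplit : V + volume B = volume (ball (0:ℂ) 1) := by
    rw [hVdef, ← measure_diff_add_inter (ball (0:ℂ) 1) hmB,
      inter_eq_right.2 hBsub]
  have hsum : V.toReal + (volume B).toReal = Real.pi := by
    rw [← ENNReal.toReal_add hVne hBne, hsplit, hballvol,
      ENNReal.toReal_ofReal pi_pos.le]
  have hBnn : (0:ℝ) ≤ (volume B).toReal := ENNReal.toReal_nonneg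
  have hB_le : (volume B).toReal ≤ Real.pi * (1 - a^2) := by nlinarith
  have hlog : 2 * Real.log a ≤ a^2 - 1 := by
    have hl := Real.log_le_sub_one_of_pos (x := a^2) (by positivity)
    rw [Real.log_pow] at hl
    push_cast at hl
    linarith
  have h5 : 1 / (2*Real.pi) * (volume B).toReal ≤ (1 - a^2)/2 := by
    calc 1 / (2*Real.pi) * (volume B).toReal
        ≤ 1 / (2*Real.pi) * (Real.pi * (1 - a^2)) :=
          mul_le_mul_of_nonneg_left hB_le (by positivity)
      _ = (1 - a^2)/2 := by
          field_simp
  linarith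

end
end

section
/- For every hull A ⊂ ℍ, as y → ∞ one has the asymptotic expansion crad(ℍ \ A, iy)/crad(ℍ, iy) = 1 − 2·hcap(A)/y² + o(y^{−2}); equivalently, lim_{y→∞} y²·(1 − crad(ℍ \ A, iy)/(2y)) = 2·hcap(A). -/
open Complex MeasureTheory Set Filter Metric Bornology Topology

noncomputable section

lemma strictDeriv_of_analytic {f : ℂ → ℂ} {c : ℂ} (h : AnalyticAt ℂ f c) :
    HasStrictDerivAt f (deriv f c) c := by
  exact h.hasStrictDerivAt

lemma deriv_ne_zero_of_injOn {f : ℂ → ℂ} {c : ℂ} {r : ℝ} (hr : 0 < r)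
    (hd : DifferentiableOn ℂ f (ball c r)) (hi : Set.InjOn f (ball c r)) :
    deriv f c ≠ 0 := by
  intro hder
  have hball : ball c r ∈ 𝓝 c := ball_mem_nhds c hr
  have hfa : AnalyticAt ℂ f c := hd.analyticAt hball
  set f₀ : ℂ → ℂ := fun z => f z - f c with hf₀def
  have hfa0 : AnalyticAt ℂ f₀ c := hfa.sub analyticAt_const
  -- two distinct points trick for the "eventually zero" case
  have hne_top : analyticOrderAt f₀ c ≠ ⊤ := by
    intro htop
    rw [analyticOrderAt_eq_top] at htop
    obtain ⟨ρ, hρpos, hρ⟩ := Metric.eventually_nhds_iff_ball.mp htop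
    set t := min ρ r / 2 with ht
    have htpos : 0 < t := by positivity
    have htlt : t < min ρ r := by
      have : 0 < min ρ r := lt_min hρpos hr
      simp only [ht]; linarith
    have habs : ‖(c + t) - c‖ = t := by
      simp [Complex.norm_of_nonneg htpos.le, abs_of_pos htpos]
    have h1 : c + t ∈ ball c ρ := by
      simp only [mem_ball, Complex.dist_eq, habs]
      exact lt_of_lt_of_le htlt (min_le_left _ _)
    have h2 : c + t ∈ ball c r := by
      simp only [mem_ball, Complex.dist_eq, habs]
      exact lt_of_lt_of_le htlt (min_le_right _ _)
    have : f (c + t) = f c := by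
      have := hρ _ h1; simpa [hf₀def, sub_eq_zero] using this
    have heq : (c + (t:ℂ)) = c := hi h2 (mem_ball_self hr) this
    have : (t:ℂ) ≠ 0 := by exact_mod_cast ne_of_gt htpos
    simp at heq
    exact this (by exact_mod_cast heq)
  obtain ⟨n, hn⟩ : ∃ n : ℕ, analyticOrderAt f₀ c = n := by
    cases h : analyticOrderAt f₀ c with
    | top => exact absurd h hne_top
    | coe n => exact ⟨n, rfl⟩
  obtain ⟨g, hg, hgc, hev⟩ := hfa0.analyticOrderAt_eq_natCast.mp hn
  -- n ≠ 0
  have hn0 : n ≠ 0 := by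
    intro h0; subst h0
    have : f₀ c = g c := by simpa using hev.self_of_nhds
    simp [hf₀def] at this
    exact hgc this.symm
  -- n ≠ 1
  have hn1 : n ≠ 1 := by
    intro h1; subst h1
    have hd0 : HasDerivAt f₀ (g c) c := by
      have h1 : HasDerivAt (fun z => (z - c) * g z) ((1 : ℂ) * g c + (c - c) * deriv g c) c := by
        exact ((hasDerivAt_id c).sub_const c).mul (hg.differentiableAt.hasDerivAt)
      simp only [one_mul, sub_self, zero_mul, add_zero] at h1
      apply h1.congr_of_eventuallyEq
      filter_upwards [hev] with z hz
      simpa using hz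
    have : deriv f₀ c = g c := hd0.deriv
    have hderiv0 : deriv f₀ c = 0 := by
      have : deriv f₀ c = deriv f c := by
        simp [hf₀def]
      rw [this, hder]
    exact hgc (by rw [← hd0.deriv, hderiv0])
  have hn2 : 2 ≤ n := by omega
  have hncC : (n : ℂ) ≠ 0 := by exact_mod_cast hn0
  -- g is nonzero near c
  have hgne : ∀ᶠ z in 𝓝 c, g z ≠ 0 := hg.continuousAt.eventually_ne hgc
  -- an analytic n-th root of g near c
  set h : ℂ → ℂ := fun z =>
    Complex.exp ((n : ℂ)⁻¹ * (Complex.log (g z / g c) + Complex.log (g c))) with hhdef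
  have hh_an : AnalyticAt ℂ h c := by
    apply analyticAt_cexp.comp
    apply AnalyticAt.mul analyticAt_const
    apply AnalyticAt.add _ analyticAt_const
    apply AnalyticAt.clog (hg.div analyticAt_const hgc)
    simp [div_self hgc, Complex.one_mem_slitPlane]
  have hhc : h c ≠ 0 := Complex.exp_ne_zero _
  have hpow : ∀ᶠ z in 𝓝 c, h z ^ n = g z := by
    filter_upwards [hgne] with z hz
    have hdiv : g z / g c ≠ 0 := div_ne_zero hz hgc
    rw [hhdef]
    rw [← Complex.exp_nat_mul, ← mul_assoc, mul_inv_cancel₀ hncC, one_mul,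
      Complex.exp_add, Complex.exp_log hdiv, Complex.exp_log hgc,
      div_mul_cancel₀ _ hgc]
  set φ : ℂ → ℂ := fun z => (z - c) * h z with hφdef
  have hφc : φ c = 0 := by simp [hφdef]
  have hφa : AnalyticAt ℂ φ c := ((analyticAt_id).sub analyticAt_const).mul hh_an
  have dφ : HasDerivAt φ (h c) c := by
    have h1 : HasDerivAt φ ((1 : ℂ) * h c + (c - c) * deriv h c) c :=
      ((hasDerivAt_id c).sub_const c).mul (hh_an.differentiableAt.hasDerivAt)
    simpa using h1
  have hs : HasStrictDerivAt φ (h c) c := by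
    have := strictDeriv_of_analytic hφa
    rwa [dφ.deriv] at this
  set ψ : ℂ → ℂ := hs.localInverse φ (h c) c hhc with hψdef
  have hE := hs.hasStrictFDerivAt_equiv hhc
  have hψc : ψ 0 = c := by
    have := hE.localInverse_apply_image
    rwa [← hφc]
  have hψcont : ContinuousAt ψ 0 := by
    have := hE.localInverse_continuousAt
    rwa [hφc] at this
  have hrinv : ∀ᶠ u in 𝓝 (0 : ℂ), φ (ψ u) = u := by
    have := hE.eventually_right_inverse
    rwa [hφc] at this
  have hevn : ∀ᶠ z in 𝓝 c, f₀ z = φ z ^ n ∧ z ∈ ball c r := by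
    filter_upwards [hev, hpow, hball] with z h1 h2 h3
    refine ⟨?_, h3⟩
    rw [hφdef]
    simp only [mul_pow, h2]
    simpa using h1
  have htend : Tendsto ψ (𝓝 0) (𝓝 c) := by
    have := hψcont.tendsto; rwa [hψc] at this
  have hS : ∀ᶠ u in 𝓝 (0 : ℂ),
      φ (ψ u) = u ∧ f₀ (ψ u) = φ (ψ u) ^ n ∧ ψ u ∈ ball c r := by
    filter_upwards [hrinv, htend.eventually hevn] with u h1 h2
    exact ⟨h1, h2.1, h2.2⟩
  obtain ⟨δ, hδpos, hδ⟩ := Metric.eventually_nhds_iff_ball.mp hS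
  set ζ : ℂ := Complex.exp (2 * Real.pi * Complex.I / n) with hζdef
  have hζn : ζ ^ n = 1 := by
    rw [hζdef, ← Complex.exp_nat_mul, mul_div_cancel₀ _ hncC]
    exact_mod_cast Complex.exp_two_pi_mul_I
  have hζabs : ‖ζ‖ = 1 := by
    rw [hζdef, Complex.norm_exp]
    have : (2 * Real.pi * Complex.I / n).re = 0 := by
      rw [div_re]
      simp [Complex.mul_re, Complex.mul_im]
    rw [this, Real.exp_zero]
  have hζne1 : ζ ≠ 1 := by
    rw [hζdef]
    intro hexp
    obtain ⟨k, hk⟩ := Complex.exp_eq_one_iff.mp hexp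
    have h2πI : (2 * Real.pi * Complex.I : ℂ) ≠ 0 := by
      simp [Complex.I_ne_zero, Real.pi_ne_zero]
    have hkn : (k : ℂ) * n = 1 := by
      have h1 : 2 * (Real.pi : ℂ) * Complex.I = (k : ℂ) * (2 * Real.pi * Complex.I) * n := by
        have h0 := congrArg (fun z => z * (n : ℂ)) hk
        simpa [div_mul_cancel₀, hncC] using h0
      have h2 : (2 * (Real.pi : ℂ) * Complex.I) * ((k : ℂ) * n)
          = (2 * (Real.pi : ℂ) * Complex.I) * 1 := by
        linear_combination -h1
      exact mul_left_cancel₀ h2πI h2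
    have hkn' : (k * n : ℤ) = 1 := by
      exact_mod_cast hkn
    have : 2 ≤ (n : ℤ) := by exact_mod_cast hn2
    rcases le_or_gt k 0 with hk0 | hk0
    · nlinarith
    · nlinarith [mul_le_mul hk0 this (by norm_num) (by positivity)]
  set w : ℂ := ((δ / 2 : ℝ) : ℂ) with hwdef
  have hwabs : ‖w‖ = δ / 2 := by
    rw [hwdef, Complex.norm_of_nonneg (by positivity)]
  have hwne : w ≠ 0 := by
    rw [hwdef]; exact_mod_cast ne_of_gt (by positivity : (0:ℝ) < δ / 2)
  have hwball : w ∈ ball (0 : ℂ) δ := by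
    simp only [mem_ball, dist_zero_right, hwabs]; linarith
  have hζwball : ζ * w ∈ ball (0 : ℂ) δ := by
    simp only [mem_ball, dist_zero_right, norm_mul, hζabs, one_mul, hwabs]
    linarith
  obtain ⟨hφ1, hf1, hb1⟩ := hδ _ hwball
  obtain ⟨hφ2, hf2, hb2⟩ := hδ _ hζwball
  have hfeq : f (ψ w) = f (ψ (ζ * w)) := by
    have e1 : f₀ (ψ w) = w ^ n := by rw [hf1, hφ1]
    have e2 : f₀ (ψ (ζ * w)) = w ^ n := by rw [hf2, hφ2, mul_pow, hζn, one_mul]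
    have : f₀ (ψ w) = f₀ (ψ (ζ * w)) := by rw [e1, e2]
    simpa [hf₀def, sub_left_inj] using this
  have hzeq : ψ w = ψ (ζ * w) := hi hb1 hb2 hfeq
  have hww : ζ * w = w := by
    have h := hφ1; rw [hzeq, hφ2] at h; exact h
  have h1w : (1 : ℂ) * w = ζ * w := by rw [one_mul]; exact hww.symm
  exact hζne1 (mul_right_cancel₀ hwne h1w).symm


lemma abs_deriv_eq_one_of_bijOn_disk {Φ : ℂ → ℂ}
    (hd : DifferentiableOn ℂ Φ (ball (0:ℂ) 1))
    (hb : Set.BijOn Φ (ball (0:ℂ) 1) (ball (0:ℂ) 1))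
    (h0 : Φ 0 = 0) : ‖deriv Φ 0‖ = 1 := by
  have h01 : (0:ℂ) ∈ ball (0:ℂ) 1 := mem_ball_self one_pos
  have hub : ‖deriv Φ 0‖ ≤ 1 := by
    have := Complex.norm_deriv_le_div_of_mapsTo_ball hd (by rw [h0]; exact hb.mapsTo.mono_right ball_subset_closedBall) one_pos
    simpa using this
  -- derivative is nonzero at every point of the disk
  have hder_ne : ∀ z ∈ ball (0:ℂ) 1, deriv Φ z ≠ 0 := by
    intro z hz
    have hr : 0 < 1 - ‖z‖ := by
      simp only [mem_ball, dist_zero_right] at hz; linarith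
    have hsub : ball z (1 - ‖z‖) ⊆ ball (0:ℂ) 1 := by
      apply ball_subset_ball'
      simp [dist_zero_right]
    exact deriv_ne_zero_of_injOn hr (hd.mono hsub) (hb.injOn.mono hsub)
  set K : ℂ → ℂ := Function.invFunOn Φ (ball (0:ℂ) 1) with hKdef
  have hinv : Set.InvOn K Φ (ball (0:ℂ) 1) (ball (0:ℂ) 1) := hb.invOn_invFunOn
  have hKmem : ∀ w ∈ ball (0:ℂ) 1, K w ∈ ball (0:ℂ) 1 := by
    intro w hw
    exact Function.invFunOn_mem (by
      obtain ⟨z, hz, hzw⟩ := hb.surjOn hw; exact ⟨z, hz, hzw⟩)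
  have hΦK : ∀ w ∈ ball (0:ℂ) 1, Φ (K w) = w := fun w hw => hinv.2 hw
  have hK0 : K 0 = 0 := by
    have := hinv.1 h01
    rwa [h0] at this
  -- K is differentiable at every point, with derivative (deriv Φ (K w))⁻¹
  have hKderiv : ∀ w ∈ ball (0:ℂ) 1, HasDerivAt K ((deriv Φ (K w))⁻¹) w := by
    intro w hw
    set z := K w with hzdef
    have hz : z ∈ ball (0:ℂ) 1 := hKmem w hw
    have hΦz : Φ z = w := hΦK w hw
    have hfa : AnalyticAt ℂ Φ z := hd.analyticAt (isOpen_ball.mem_nhds hz)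
    have hne : deriv Φ z ≠ 0 := hder_ne z hz
    have hs : HasStrictDerivAt Φ (deriv Φ z) z := strictDeriv_of_analytic hfa
    have hE := hs.hasStrictFDerivAt_equiv hne
    set ψ := hs.localInverse Φ (deriv Φ z) z hne with hψdef
    have hψinv : HasStrictDerivAt ψ (deriv Φ z)⁻¹ w := by
      have := hs.to_localInverse (hf' := hne)
      rwa [hΦz] at this
    have hψw : ψ w = z := by
      have := hE.localInverse_apply_image
      rwa [hΦz] at this
    have hψcont : ContinuousAt ψ w := by
      have := hE.localInverse_continuousAt
      rwa [hΦz] at this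
    have hrinv : ∀ᶠ u in 𝓝 w, Φ (ψ u) = u := by
      have := hE.eventually_right_inverse
      rwa [hΦz] at this
    have hψmem : ∀ᶠ u in 𝓝 w, ψ u ∈ ball (0:ℂ) 1 := by
      have ht : Tendsto ψ (𝓝 w) (𝓝 z) := by
        have := hψcont.tendsto; rwa [hψw] at this
      exact ht.eventually (isOpen_ball.eventually_mem hz)
    have hKψ : K =ᶠ[𝓝 w] ψ := by
      filter_upwards [hrinv, hψmem, isOpen_ball.eventually_mem hw] with u h1 h2 h3
      exact hb.injOn (hKmem u h3) h2 (by rw [hΦK u h3, h1])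
    exact (hψinv.hasDerivAt).congr_of_eventuallyEq hKψ
  have hKdiff : DifferentiableOn ℂ K (ball (0:ℂ) 1) := fun w hw =>
    ((hKderiv w hw).differentiableAt).differentiableWithinAt
  have hKmaps : MapsTo K (ball (0:ℂ) 1) (ball (K 0) 1) := by
    rw [hK0]
    intro w hw; exact hKmem w hw
  have hKub : ‖deriv K 0‖ ≤ 1 := by
    have := Complex.norm_deriv_le_div_of_mapsTo_ball hKdiff (hKmaps.mono_right ball_subset_closedBall) one_pos
    simpa using this
  have hdK0 : deriv K 0 = (deriv Φ 0)⁻¹ := by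
    have := (hKderiv 0 h01).deriv
    rwa [hK0] at this
  rw [hdK0, norm_inv] at hKub
  have hne0 : ‖deriv Φ 0‖ ≠ 0 := by
    simpa using hder_ne 0 h01
  have hpos : 0 < ‖deriv Φ 0‖ := lt_of_le_of_ne (norm_nonneg _) (Ne.symm hne0)
  have : 1 ≤ ‖deriv Φ 0‖ := by
    have := (inv_le_one₀ hpos).mp ?_
    · exact this
    · exact hKub
  linarith

-- key identity
lemma abs_sq_sub {z w : ℂ} :
    ‖z - (starRingEnd ℂ) w‖ ^ 2 - ‖z - w‖ ^ 2 = 4 * z.im * w.im := by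
  rw [Complex.sq_norm, Complex.sq_norm, Complex.normSq_apply, Complex.normSq_apply]
  simp [Complex.sub_re, Complex.sub_im, Complex.conj_re, Complex.conj_im]
  ring

lemma mobius_den_ne {z w : ℂ} (hz : 0 < z.im) (hw : 0 < w.im) :
    z - (starRingEnd ℂ) w ≠ 0 := by
  intro hzero
  have : (z - (starRingEnd ℂ) w).im = z.im + w.im := by
    simp [Complex.sub_im, Complex.conj_im]
  rw [hzero] at this
  simp at this
  linarith

lemma mobius_mapsTo {z w : ℂ} (hz : 0 < z.im) (hw : 0 < w.im) :
    ‖(z - w) / (z - (starRingEnd ℂ) w)‖ < 1 := by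
  rw [norm_div, div_lt_one (by
    have := mobius_den_ne hz hw
    exact norm_pos_iff.mpr this)]
  apply lt_of_pow_lt_pow_left₀ 2 (norm_nonneg _)
  nlinarith [abs_sq_sub (z := z) (w := w), mul_pos (mul_pos (by norm_num : (0:ℝ) < 4) hz) hw]

lemma mobius_bijOn {w : ℂ} (hw : 0 < w.im) :
    Set.BijOn (fun z => (z - w) / (z - (starRingEnd ℂ) w)) {z : ℂ | 0 < z.im} (ball (0:ℂ) 1) := by
  have hwne : w - (starRingEnd ℂ) w ≠ 0 := by
    intro h0
    have : (w - (starRingEnd ℂ) w).im = 2 * w.im := by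
      simp [Complex.sub_im, Complex.conj_im]; ring
    rw [h0] at this; simp at this; linarith
  refine ⟨?_, ?_, ?_⟩
  · intro z hz
    simp only [mem_ball, dist_zero_right]
    exact mobius_mapsTo hz hw
  · intro z₁ h₁ z₂ h₂ heq
    simp only [mem_setOf_eq] at h₁ h₂
    have d₁ := mobius_den_ne h₁ hw
    have d₂ := mobius_den_ne h₂ hw
    rw [div_eq_div_iff d₁ d₂] at heq
    have : (z₁ - z₂) * (w - (starRingEnd ℂ) w) = 0 := by linear_combination heq
    rcases mul_eq_zero.mp this with h | h
    · exact sub_eq_zero.mp h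
    · exact absurd h hwne
  · intro u hu
    simp only [mem_ball, dist_zero_right] at hu
    have h1u : (1 : ℂ) - u ≠ 0 := by
      intro h0
      have : u = 1 := by linear_combination -h0
      rw [this] at hu; simp at hu
    set z := (w - (starRingEnd ℂ) w * u) / (1 - u) with hzdef
    have hzw : z - w = u * (w - (starRingEnd ℂ) w) / (1 - u) := by
      rw [hzdef]; field_simp; ring
    have hzwc : z - (starRingEnd ℂ) w = (w - (starRingEnd ℂ) w) / (1 - u) := by
      rw [hzdef]; field_simp; ring
    have hzwcne : z - (starRingEnd ℂ) w ≠ 0 := by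
      rw [hzwc]; exact div_ne_zero hwne h1u
    have habs : ‖z - w‖ = ‖u‖ * ‖z - (starRingEnd ℂ) w‖ := by
      rw [hzw, hzwc, norm_div, norm_div, norm_mul]; ring
    have hzim : 0 < z.im := by
      have hid := abs_sq_sub (z := z) (w := w)
      have hlt : ‖z - w‖ ^ 2 < ‖z - (starRingEnd ℂ) w‖ ^ 2 := by
        rw [habs, mul_pow]
        have hpos : 0 < ‖z - (starRingEnd ℂ) w‖ ^ 2 :=
          pow_pos (norm_pos_iff.mpr hzwcne) 2
        have hsq : ‖u‖ ^ 2 < 1 := by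
          nlinarith [norm_nonneg u]
        nlinarith [mul_pos (by linarith : (0:ℝ) < 1 - ‖u‖ ^ 2) hpos]
      nlinarith
    refine ⟨z, hzim, ?_⟩
    simp only
    rw [hzw, hzwc]
    field_simp
  done

lemma crad_formula {A : Set ℂ} {g fy : ℂ → ℂ} {z₀ : ℂ}
    (hopen : IsOpen ({z : ℂ | 0 < z.im} \ A))
    (hgd : DifferentiableOn ℂ g ({z : ℂ | 0 < z.im} \ A))
    (hgb : Set.BijOn g ({z : ℂ | 0 < z.im} \ A) {z : ℂ | 0 < z.im})
    (hfd : DifferentiableOn ℂ fy (ball (0:ℂ) 1))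
    (hfb : Set.BijOn fy (ball (0:ℂ) 1) ({z : ℂ | 0 < z.im} \ A))
    (hf0 : fy 0 = z₀) (hz₀ : z₀ ∈ {z : ℂ | 0 < z.im} \ A) :
    ‖deriv g z₀‖ * ‖deriv fy 0‖ = 2 * (g z₀).im := by
  set w := g z₀ with hwdef
  have hw : 0 < w.im := hgb.mapsTo hz₀
  set T : ℂ → ℂ := fun z => (z - w) / (z - (starRingEnd ℂ) w) with hTdef
  have hTd : DifferentiableOn ℂ T {z : ℂ | 0 < z.im} := by
    intro z hz
    exact ((differentiableAt_id.sub_const w).div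
      (differentiableAt_id.sub_const _) (mobius_den_ne hz hw)).differentiableWithinAt
  have hTb := mobius_bijOn hw
  have hHd : DifferentiableOn ℂ (T ∘ g ∘ fy) (ball (0:ℂ) 1) :=
    hTd.comp (hgd.comp hfd hfb.mapsTo) (hgb.mapsTo.comp hfb.mapsTo)
  have hHb : Set.BijOn (T ∘ g ∘ fy) (ball (0:ℂ) 1) (ball (0:ℂ) 1) :=
    hTb.comp (hgb.comp hfb)
  have hTw : T w = 0 := by rw [hTdef]; simp
  have hH0 : (T ∘ g ∘ fy) 0 = 0 := by
    simp only [Function.comp_apply, hf0, ← hwdef, hTw]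
  have habs1 : ‖deriv (T ∘ g ∘ fy) 0‖ = 1 :=
    abs_deriv_eq_one_of_bijOn_disk hHd hHb hH0
  -- chain rule
  have h0mem : (0:ℂ) ∈ ball (0:ℂ) 1 := mem_ball_self one_pos
  have hfyd : HasDerivAt fy (deriv fy 0) 0 :=
    (hfd.differentiableAt (isOpen_ball.mem_nhds h0mem)).hasDerivAt
  have hgd' : HasDerivAt g (deriv g z₀) z₀ :=
    (hgd.differentiableAt (hopen.mem_nhds hz₀)).hasDerivAt
  have hden : w - (starRingEnd ℂ) w ≠ 0 := by
    intro h0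
    have : (w - (starRingEnd ℂ) w).im = 2 * w.im := by
      simp [Complex.sub_im, Complex.conj_im]; ring
    rw [h0] at this; simp at this; linarith
  have hTd' : HasDerivAt T ((w - (starRingEnd ℂ) w)⁻¹) w := by
    have h1 : HasDerivAt (fun z : ℂ => z - w) 1 w := (hasDerivAt_id w).sub_const w
    have h2 : HasDerivAt (fun z : ℂ => z - (starRingEnd ℂ) w) 1 w :=
      (hasDerivAt_id w).sub_const _
    have := h1.div h2 hden
    refine this.congr_deriv ?_
    simp only [sub_self, zero_mul, mul_one, one_mul, sub_zero]
    rw [pow_two, ← div_div, div_self hden, one_div]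
  have hinner : HasDerivAt (g ∘ fy) (deriv g z₀ * deriv fy 0) 0 := by
    apply HasDerivAt.comp
    · rw [hf0]; exact hgd'
    · exact hfyd
  have hH' : HasDerivAt (T ∘ g ∘ fy)
      ((w - (starRingEnd ℂ) w)⁻¹ * (deriv g z₀ * deriv fy 0)) 0 := by
    have : (g ∘ fy) 0 = w := by simp [Function.comp_apply, hf0, hwdef]
    exact HasDerivAt.comp 0 (this ▸ hTd') hinner
  rw [hH'.deriv] at habs1
  rw [norm_mul, norm_inv, norm_mul] at habs1
  have habsden : ‖w - (starRingEnd ℂ) w‖ = 2 * w.im := by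
    rw [Complex.sub_conj]
    simp [Complex.norm_of_nonneg, abs_of_pos hw, _root_.abs_of_pos hw]
  rw [habsden] at habs1
  have h2w : (0:ℝ) < 2 * w.im := by linarith
  field_simp at habs1
  linarith [habs1]

lemma master {A : Set ℂ} {g : ℂ → ℂ} {h : ℝ}
    (hbd : IsBounded A)
    (hgd : DifferentiableOn ℂ g ({z : ℂ | 0 < z.im} \ A))
    (hlim : Tendsto (fun z => z * (g z - z))
      (Bornology.cobounded ℂ ⊓ 𝓟 ({z : ℂ | 0 < z.im} \ A)) (𝓝 (h:ℂ)))
    {ε : ℝ} (hε : 0 < ε) :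
    ∀ᶠ y : ℝ in atTop,
      Complex.I * (y:ℂ) ∈ {z : ℂ | 0 < z.im} \ A ∧
      ‖(fun z => g z - z - (h:ℂ)/z) (Complex.I * y)‖ ≤ 2*ε/y ∧
      ‖deriv (fun z => g z - z - (h:ℂ)/z) (Complex.I * y)‖ ≤ 10*ε/y^2 := by
  set E : ℂ → ℂ := fun z => g z - z - (h:ℂ)/z with hEdef
  obtain ⟨M, hM⟩ := hbd.subset_closedBall 0
  have hev : ∀ᶠ z in Bornology.cobounded ℂ ⊓ 𝓟 ({z : ℂ | 0 < z.im} \ A),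
      dist (z * (g z - z)) (h:ℂ) < ε := Metric.tendsto_nhds.mp hlim ε hε
  obtain ⟨S, hS, P, hP, hSP⟩ := Filter.eventually_inf.mp hev
  obtain ⟨R, -, hR⟩ := (Metric.hasBasis_cobounded_compl_closedBall (0:ℂ)).mem_iff.mp hS
  filter_upwards [eventually_ge_atTop (max (2*|M|+1) (max (2*|R|+1) 1))] with y hy
  have hy1 : (1:ℝ) ≤ y := le_trans (le_max_of_le_right (le_max_right _ _)) hy
  have hyM : 2*|M|+1 ≤ y := le_trans (le_max_left _ _) hy
  have hyR : 2*|R|+1 ≤ y := le_trans (le_max_of_le_right (le_max_left _ _)) hy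
  have hy0 : (0:ℝ) < y := by linarith
  -- membership of iy
  have habsiy : ‖Complex.I * y‖ = y := by
    rw [norm_mul, Complex.norm_I, one_mul, Complex.norm_of_nonneg hy0.le]
  have hiy : Complex.I * (y:ℂ) ∈ {z : ℂ | 0 < z.im} \ A := by
    constructor
    · show (0:ℝ) < (Complex.I * y).im
      simp [Complex.mul_im]
      exact hy0
    · intro hmem
      have := hM hmem
      rw [mem_closedBall, dist_zero_right, habsiy] at this
      have : |M| ≥ y := le_trans this (le_abs_self M)
      linarith
  -- the ball around iy is inside the domain and far out
  have hball : ∀ z ∈ ball (Complex.I * (y:ℂ)) (y/2),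
      z ∈ {z : ℂ | 0 < z.im} \ A ∧ y/2 < ‖z‖ := by
    intro z hz
    rw [mem_ball, dist_eq_norm] at hz
    have him : |z.im - y| ≤ ‖z - Complex.I * y‖ := by
      have := Complex.abs_im_le_norm (z - Complex.I * y)
      simpa [Complex.sub_im, Complex.mul_im] using this
    have himz : y/2 < z.im := by
      have := abs_lt.mp (lt_of_le_of_lt him hz)
      linarith [this.1]
    have habsz : y/2 < ‖z‖ := lt_of_lt_of_le himz
      (le_trans (le_abs_self z.im) (Complex.abs_im_le_norm z))
    refine ⟨⟨?_, ?_⟩, habsz⟩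
    · show (0:ℝ) < z.im
      linarith
    · intro hmem
      have h1 := hM hmem
      rw [mem_closedBall, dist_zero_right] at h1
      have h2 : M ≤ |M| := le_abs_self M
      linarith
  -- everything in the ball satisfies the `hcap` estimate
  have hest : ∀ z ∈ ball (Complex.I * (y:ℂ)) (y/2),
      ‖z * (g z - z) - (h:ℂ)‖ ≤ ε := by
    intro z hz
    obtain ⟨hzm, hzabs⟩ := hball z hz
    have hzS : z ∈ S := by
      apply hR
      simp only [mem_compl_iff, mem_closedBall, dist_zero_right, not_le]
      have : R ≤ |R| := le_abs_self R
      linarith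
    have hzP : z ∈ P := mem_principal.mp hP hzm
    have := hSP z ⟨hzS, hzP⟩
    rw [Complex.dist_eq] at this
    exact this.le
  -- sup bound on E over the ball
  have hzne : ∀ z ∈ ball (Complex.I * (y:ℂ)) (y/2), z ≠ 0 := by
    intro z hz h0
    obtain ⟨⟨him, -⟩, -⟩ := hball z hz
    rw [h0] at him
    simp at him
  have hEbound : ∀ z ∈ ball (Complex.I * (y:ℂ)) (y/2), ‖E z‖ ≤ 2*ε/y := by
    intro z hz
    obtain ⟨hzm, hzabs⟩ := hball z hz
    have hz0 := hzne z hz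
    have hEeq : E z = (z * (g z - z) - (h:ℂ)) / z := by
      rw [hEdef]
      field_simp
    rw [hEeq, norm_div]
    rw [div_le_div_iff₀ (norm_pos_iff.mpr hz0) hy0]
    have h1 := hest z hz
    have h2 : ‖z * (g z - z) - (h:ℂ)‖ * y ≤ ε * y := by
      apply mul_le_mul_of_nonneg_right h1 hy0.le
    calc ‖z * (g z - z) - (h:ℂ)‖ * y ≤ ε * y := h2
      _ ≤ 2*ε * (y/2) := by ring_nf; rfl
      _ ≤ 2*ε * ‖z‖ := by
          apply mul_le_mul_of_nonneg_left hzabs.le (by linarith)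
  -- E is differentiable on the ball
  have hEdiff : DifferentiableOn ℂ E (ball (Complex.I * (y:ℂ)) (y/2)) := by
    intro z hz
    obtain ⟨hzm, -⟩ := hball z hz
    have hz0 := hzne z hz
    have hgz : DifferentiableWithinAt ℂ g (ball (Complex.I * (y:ℂ)) (y/2)) z := by
      apply (hgd z hzm).mono_of_mem_nhdsWithin
      apply mem_nhdsWithin_of_mem_nhds
      apply Filter.mem_of_superset (isOpen_ball.mem_nhds hz)
      intro u hu; exact (hball u hu).1
    exact (hgz.sub (differentiableWithinAt_id)).sub
      ((differentiableWithinAt_const _).div differentiableWithinAt_id hz0)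
  -- Schwarz-type bound on deriv E at iy
  have hiymem : Complex.I * (y:ℂ) ∈ ball (Complex.I * (y:ℂ)) (y/2) :=
    mem_ball_self (by linarith)
  have hmaps : MapsTo E (ball (Complex.I * (y:ℂ)) (y/2))
      (ball (E (Complex.I * (y:ℂ))) (5*ε/y)) := by
    intro z hz
    rw [mem_ball, dist_eq_norm]
    calc ‖E z - E (Complex.I * y)‖
        ≤ ‖E z‖ + ‖E (Complex.I * y)‖ := by
          exact (norm_sub_le _ _)
      _ ≤ 2*ε/y + 2*ε/y := add_le_add (hEbound z hz) (hEbound _ hiymem)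
      _ < 5*ε/y := by
          rw [← add_div, div_lt_div_iff₀ hy0 hy0]
          nlinarith
  have hderiv := Complex.norm_deriv_le_div_of_mapsTo_ball hEdiff (hmaps.mono_right ball_subset_closedBall) (by linarith : (0:ℝ) < y/2)
  refine ⟨hiy, hEbound _ hiymem, ?_⟩
  calc ‖deriv E (Complex.I * y)‖ ≤ (5*ε/y) / (y/2) := hderiv
    _ = 10*ε/y^2 := by field_simp; ring

lemma abs_one_add_est {u : ℂ} (hu : ‖u‖ ≤ 1/2) :
    0 ≤ ‖1+u‖ - (1 + u.re) ∧
      ‖1+u‖ - (1 + u.re) ≤ ‖u‖ ^ 2 := by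
  set s := ‖1+u‖ with hsdef
  have hs0 : 0 ≤ s := norm_nonneg _
  have hs2 : s^2 = (1+u.re)^2 + u.im^2 := by
    rw [hsdef, Complex.sq_norm, Complex.normSq_apply]
    simp [Complex.add_re, Complex.add_im]
    ring
  have hre : |u.re| ≤ ‖u‖ := Complex.abs_re_le_norm u
  have him : |u.im| ≤ ‖u‖ := Complex.abs_im_le_norm u
  have ht : (1:ℝ)/2 ≤ 1 + u.re := by
    have := neg_abs_le u.re
    linarith
  have hst : 1 + u.re ≤ s := by nlinarith
  have himsq : u.im^2 ≤ ‖u‖ ^ 2 := by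
    have h1 : u.im^2 = |u.im|^2 := (_root_.sq_abs u.im).symm
    nlinarith [mul_self_le_mul_self (abs_nonneg u.im) him]
  constructor
  · linarith
  · nlinarith

end

noncomputable section

set_option maxHeartbeats 1000000 in
/-- For every hull `A ⊆ ℍ`, as `y → ∞`,
`crad(ℍ \ A, iy) / crad(ℍ, iy) = 1 - 2 hcap(A)/y² + o(y⁻²)`; since `crad(ℍ, iy) = 2y`,
this is equivalent to `lim_{y → ∞} y² (1 - crad(ℍ \ A, iy)/(2y)) = 2 hcap(A)`.
Here `hcap(A) = h` is witnessed by the hydrodynamically normalized map `g`, and for each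
`y` with `iy ∈ ℍ \ A`, `crad(ℍ \ A, iy) = |(fy y)'(0)|` is witnessed by a conformal map
`fy y : 𝔻 → ℍ \ A` with `fy y 0 = iy`. -/
theorem crad_expansion_at_infinity (A : Set ℂ) (g : ℂ → ℂ) (h : ℝ) (fy : ℝ → ℂ → ℂ)
    (hA : IsHull A) (hg : HasHcap A g h)
    (hfy : ∀ y : ℝ, Complex.I * (y : ℂ) ∈ UHP \ A →
      IsConformalMapOn (fy y) unitDisk (UHP \ A) ∧ fy y 0 = Complex.I * (y : ℂ)) :
    Tendsto (fun y : ℝ => y ^ 2 * (1 - ‖deriv (fy y) 0‖ / (2 * y)))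
      atTop (𝓝 (2 * h)) := by
  obtain ⟨⟨⟨hgd, hgb⟩, -⟩, hglim⟩ := hg
  obtain ⟨hsub, hbd, hopen, hsc⟩ := hA
  have hgd' : DifferentiableOn ℂ g ({z : ℂ | 0 < z.im} \ A) := hgd
  have hgb' : Set.BijOn g ({z : ℂ | 0 < z.im} \ A) {z : ℂ | 0 < z.im} := hgb
  have hglim' : Tendsto (fun z => z * (g z - z))
      (Bornology.cobounded ℂ ⊓ 𝓟 ({z : ℂ | 0 < z.im} \ A)) (𝓝 (h:ℂ)) := hglim
  have hopen' : IsOpen ({z : ℂ | 0 < z.im} \ A) := hopen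
  set E : ℂ → ℂ := fun z => g z - z - (h:ℂ)/z with hEdef
  set a : ℝ → ℝ := fun y => ‖deriv g (Complex.I * y)‖ with hadef
  set b : ℝ → ℝ := fun y => (g (Complex.I * y)).im with hbdef
  have hmaster : ∀ {ε : ℝ}, 0 < ε → ∀ᶠ y : ℝ in atTop,
      Complex.I * (y:ℂ) ∈ {z : ℂ | 0 < z.im} \ A ∧
      ‖E (Complex.I * y)‖ ≤ 2*ε/y ∧
      ‖deriv E (Complex.I * y)‖ ≤ 10*ε/y^2 :=
    fun {ε} hε => master hbd hgd' hglim' hε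
  -- Step 1: identities for `g` and `deriv g` at `iy`.
  have hstep1 : ∀ᶠ y : ℝ in atTop,
      deriv g (Complex.I * y) = 1 + (h:ℂ)/(y:ℂ)^2 + deriv E (Complex.I * y) ∧
      g (Complex.I * y) = Complex.I * y + (h:ℂ)/(Complex.I * y) + E (Complex.I * y) ∧
      Complex.I * (y:ℂ) ∈ UHP \ A := by
    filter_upwards [hmaster one_pos, eventually_ge_atTop (1:ℝ)] with y hy hy1
    obtain ⟨hiy, -, -⟩ := hy
    have hy0 : (0:ℝ) < y := by linarith
    have hyC : (y:ℂ) ≠ 0 := by exact_mod_cast hy0.ne'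
    have hiyne : Complex.I * (y:ℂ) ≠ 0 := mul_ne_zero Complex.I_ne_zero hyC
    refine ⟨?_, by simp only [hEdef]; ring, hiy⟩
    have hgdiff : DifferentiableAt ℂ g (Complex.I * y) :=
      (hgd _ hiy).differentiableAt (hopen.mem_nhds hiy)
    have hEdiff : DifferentiableAt ℂ E (Complex.I * y) :=
      (hgdiff.sub differentiableAt_id).sub
        ((differentiableAt_const _).div differentiableAt_id hiyne)
    have hinv : HasDerivAt (fun z : ℂ => (h:ℂ)/z)
        ((0 * (Complex.I*(y:ℂ)) - (h:ℂ) * 1)/(Complex.I*(y:ℂ))^2) (Complex.I*y) :=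
      (hasDerivAt_const _ _).div (hasDerivAt_id _) hiyne
    have hsum : HasDerivAt (fun z => z + (h:ℂ)/z + E z)
        (1 + (0 * (Complex.I*(y:ℂ)) - (h:ℂ) * 1)/(Complex.I*(y:ℂ))^2
          + deriv E (Complex.I*y)) (Complex.I*y) :=
      ((hasDerivAt_id _).add hinv).add hEdiff.hasDerivAt
    have hfun : g = fun z => z + (h:ℂ)/z + E z := by
      funext z; rw [hEdef]; ring
    have hder : deriv g (Complex.I*y)
        = 1 + (0 * (Complex.I*(y:ℂ)) - (h:ℂ) * 1)/(Complex.I*(y:ℂ))^2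
          + deriv E (Complex.I*y) := by
      conv_lhs => rw [hfun]
      exact hsum.deriv
    rw [hder]
    have hIsq : (Complex.I*(y:ℂ))^2 = -((y:ℂ)^2) := by
      rw [mul_pow, Complex.I_sq]; ring
    rw [hIsq]
    have : (0 * (Complex.I*(y:ℂ)) - (h:ℂ) * 1) / -((y:ℂ)^2) = (h:ℂ)/(y:ℂ)^2 := by
      field_simp
      ring
    rw [this]
  -- Step 2: the conformal radius identity.
  have hstep2 : ∀ᶠ y : ℝ in atTop,
      a y * ‖deriv (fy y) 0‖ = 2 * b y := by
    filter_upwards [hstep1] with y hy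
    obtain ⟨-, -, hiy⟩ := hy
    obtain ⟨⟨hfyd, hfyb⟩, hfy0⟩ := hfy y hiy
    exact crad_formula hopen' hgd' hgb' hfyd hfyb hfy0 hiy
  -- Limit T2 : y (y - b y) → h
  have hT2 : Tendsto (fun y : ℝ => y * (y - b y)) atTop (𝓝 h) := by
    rw [Metric.tendsto_nhds]
    intro ε' hε'
    have hε4 : 0 < ε'/4 := by linarith
    filter_upwards [hmaster hε4, hstep1, eventually_ge_atTop (1:ℝ)] with y hm h1 hy1
    obtain ⟨-, hEb, -⟩ := hm
    obtain ⟨-, hgeq, -⟩ := h1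
    have hy0 : (0:ℝ) < y := by linarith
    have hyC : (y:ℂ) ≠ 0 := by exact_mod_cast hy0.ne'
    have hdivI : (h:ℂ)/(Complex.I*(y:ℂ)) = -((((h/y : ℝ)):ℂ)) * Complex.I := by
      rw [div_eq_iff (mul_ne_zero Complex.I_ne_zero hyC)]
      push_cast
      field_simp
      linear_combination (h:ℂ) * Complex.I_sq
    have him : ((h:ℂ)/(Complex.I * y)).im = -(h/y) := by
      rw [hdivI]
      simp
    have hb : b y = y + (-(h/y)) + (E (Complex.I*y)).im := by
      rw [hbdef]
      simp only
      rw [hgeq, Complex.add_im, Complex.add_im, him]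
      congr 2
      simp [Complex.mul_im]
    have heq : y * (y - b y) - h = -(y * (E (Complex.I*y)).im) := by
      rw [hb]
      field_simp
      ring
    rw [Real.dist_eq, heq, abs_neg, abs_mul, abs_of_pos hy0]
    have himE : |(E (Complex.I*y)).im| ≤ ‖E (Complex.I*y)‖ :=
      Complex.abs_im_le_norm _
    calc y * |(E (Complex.I*y)).im| ≤ y * (2*(ε'/4)/y) := by
          apply mul_le_mul_of_nonneg_left (le_trans himE hEb) hy0.le
      _ = ε'/2 := by field_simp; ring
      _ < ε' := by linarith
  -- Limit T1 : y² (a y - 1) → h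
  have hT1 : Tendsto (fun y : ℝ => y^2 * (a y - 1)) atTop (𝓝 h) := by
    rw [Metric.tendsto_nhds]
    intro ε' hε'
    set ε := min (ε'/3) 1 with hεdef
    have hε : 0 < ε := lt_min (by linarith) one_pos
    have hε1 : ε ≤ 1 := min_le_right _ _
    have hε3 : ε ≤ ε'/3 := min_le_left _ _
    filter_upwards [hmaster (show (0:ℝ) < ε/10 by linarith), hstep1,
      eventually_ge_atTop (1:ℝ), eventually_ge_atTop (2*(|h|+1)),
      eventually_ge_atTop ((|h|+1)^2/ε)] with y hm h1 hy1 hy2 hy3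
    obtain ⟨-, -, hDb⟩ := hm
    obtain ⟨hder, -, -⟩ := h1
    have hy0 : (0:ℝ) < y := by linarith
    have hysq : y ≤ y^2 := by nlinarith
    have hy2pos : (0:ℝ) < y^2 := by positivity
    set D := deriv E (Complex.I * y) with hDdef
    have hD : ‖D‖ ≤ ε / y^2 := by
      calc ‖D‖ ≤ 10*(ε/10)/y^2 := hDb
        _ = ε/y^2 := by ring
    set u : ℂ := (h:ℂ)/(y:ℂ)^2 + D with hudef
    have hresq : ((h:ℂ)/(y:ℂ)^2) = (((h/y^2 : ℝ)):ℂ) := by push_cast; ring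
    have hau : a y = ‖1 + u‖ := by
      rw [hadef]
      simp only
      rw [hder, hudef]
      congr 1
      ring
    have habsu : ‖u‖ ≤ (|h|+1)/y^2 := by
      calc ‖u‖ ≤ ‖(h:ℂ)/(y:ℂ)^2‖ + ‖D‖ :=
            norm_add_le _ _
        _ ≤ |h|/y^2 + ε/y^2 := by
            rw [hresq, Complex.norm_real, Real.norm_eq_abs, abs_div, abs_of_pos hy2pos]
            exact add_le_add (le_refl _) hD
        _ ≤ (|h|+1)/y^2 := by
            rw [← add_div]
            gcongr
    have hu12 : ‖u‖ ≤ 1/2 := by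
      refine le_trans habsu ?_
      rw [div_le_iff₀ hy2pos]
      nlinarith
    obtain ⟨hlow, hupp⟩ := abs_one_add_est hu12
    have hreu : u.re = h/y^2 + D.re := by
      rw [hudef, Complex.add_re, hresq, Complex.ofReal_re]
    have hDre : |D.re| ≤ ε/y^2 := le_trans (Complex.abs_re_le_norm D) hD
    have e1 : y^2*(a y - 1) - h
        = y^2*(‖1+u‖ - (1 + u.re)) + y^2 * D.re := by
      rw [hau, hreu]
      have hc : y^2*(h/y^2) = h := by field_simp
      linear_combination hc
    have hquad : y^2 * ‖u‖ ^ 2 ≤ ε := by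
      have h1 : ‖u‖ ^ 2 ≤ ((|h|+1)/y^2)^2 :=
        pow_le_pow_left₀ (norm_nonneg _) habsu 2
      have h2 : y^2 * ((|h|+1)/y^2)^2 = (|h|+1)^2/y^2 := by
        field_simp
      have h3 : (|h|+1)^2/y^2 ≤ ε := by
        rw [div_le_iff₀ hy2pos]
        have h4 : (|h|+1)^2 ≤ y * ε := (div_le_iff₀ hε).mp hy3
        nlinarith
      calc y^2 * ‖u‖ ^ 2 ≤ y^2 * ((|h|+1)/y^2)^2 :=
            mul_le_mul_of_nonneg_left h1 hy2pos.le
        _ = (|h|+1)^2/y^2 := h2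
        _ ≤ ε := h3
    rw [Real.dist_eq, e1]
    have hterm1 : |y^2*(‖1+u‖ - (1 + u.re))| ≤ y^2 * ‖u‖ ^ 2 := by
      rw [abs_mul, abs_of_pos hy2pos, _root_.abs_of_nonneg hlow]
      exact mul_le_mul_of_nonneg_left hupp hy2pos.le
    have hterm2 : |y^2 * D.re| ≤ ε := by
      rw [abs_mul, abs_of_pos hy2pos]
      calc y^2 * |D.re| ≤ y^2 * (ε/y^2) := mul_le_mul_of_nonneg_left hDre hy2pos.le
        _ = ε := by field_simp
    calc |y^2*(‖1+u‖ - (1 + u.re)) + y^2 * D.re|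
        ≤ |y^2*(‖1+u‖ - (1 + u.re))| + |y^2 * D.re| := abs_add_le _ _
      _ ≤ (y^2 * ‖u‖ ^ 2) + ε := add_le_add hterm1 hterm2
      _ ≤ ε + ε := by linarith
      _ < ε' := by linarith
  -- Limit T3 : a → 1
  have ht2' : Tendsto (fun y : ℝ => ((y:ℝ)^2)⁻¹) atTop (𝓝 0) :=
    (tendsto_pow_atTop (by norm_num : 2 ≠ 0)).inv_tendsto_atTop
  have hT3 : Tendsto a atTop (𝓝 1) := by
    have hmul : Tendsto (fun y : ℝ => (y^2*(a y - 1)) * ((y:ℝ)^2)⁻¹)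
        atTop (𝓝 (h * 0)) := hT1.mul ht2'
    rw [mul_zero] at hmul
    have hsub1 : Tendsto (fun y : ℝ => a y - 1) atTop (𝓝 0) := by
      apply hmul.congr'
      filter_upwards [eventually_ge_atTop (1:ℝ)] with y hy
      have hy2 : (y:ℝ)^2 ≠ 0 := by positivity
      field_simp
    have := hsub1.add_const 1
    simpa using this
  have hane : ∀ᶠ y in atTop, (1:ℝ)/2 < a y :=
    hT3.eventually (eventually_gt_nhds (by norm_num))
  have hfinal : Tendsto (fun y : ℝ => (y^2*(a y - 1) + y*(y - b y)) / a y)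
      atTop (𝓝 ((h + h)/1)) := (hT1.add hT2).div hT3 one_ne_zero
  have h2h : ((h:ℝ) + h)/1 = 2*h := by ring
  rw [h2h] at hfinal
  apply hfinal.congr'
  filter_upwards [hstep2, hane, eventually_ge_atTop (1:ℝ)] with y hcr ha2 hy1
  have hy0 : (0:ℝ) < y := by linarith
  have hane' : a y ≠ 0 := by linarith
  have hcrad : ‖deriv (fy y) 0‖ = 2 * b y / a y := by
    rw [eq_div_iff hane']
    linarith [hcr]
  rw [hcrad]
  field_simp
  ring


end
end
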